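/- Let R be a commutative ring and let f_1, ..., f_m be a regular sequence generating the ideal I = (f_1,...,f_m). Then the associated graded ring G_I(R) = ⊕_{r ≥ 0} I^r/I^{r+1} is isomorphic, as a graded (R/I)-algebra, to the polynomial ring (R/I)[x_1, ..., x_m], where x_j corresponds to the image of f_j in I/I^2. -/

import Mathlib

open MvPolynomial

namespace QuasiRegAux

variable {R : Type*} [CommRing R] {m : ℕ}

/-- The ideal generated by the first `n` elements of `f`. -/
noncomputable def Jn (f : Fin m → R) (n : ℕ) : Ideal R :=
  Ideal.span (f '' {l : Fin m | (l : ℕ) < n})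

/-- `p` only involves variables of index `< n`. -/
def SuppBelow (n : ℕ) (p : MvPolynomial (Fin m) R) : Prop :=
  ∀ d ∈ p.support, ∀ i : Fin m, d i ≠ 0 → (i : ℕ) < n

lemma Jn_mono (f : Fin m → R) {n n' : ℕ} (h : n ≤ n') : Jn f n ≤ Jn f n' :=
  Ideal.span_mono (Set.image_mono fun _ hl => lt_of_lt_of_le hl h)

lemma f_mem_Jn (f : Fin m → R) {n : ℕ} {i : Fin m} (hi : (i : ℕ) < n) : f i ∈ Jn f n :=
  Ideal.subset_span ⟨i, hi, rfl⟩

lemma Jn_eq_span (f : Fin m → R) (k : Fin m) :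
    Ideal.span (f '' {l : Fin m | l < k}) = Jn f (k : ℕ) := rfl

lemma suppBelow_coeff_ne {n : ℕ} {p : MvPolynomial (Fin m) R} (hp : SuppBelow n p)
    {d : Fin m →₀ ℕ} (hd : coeff d p ≠ 0) : ∀ i : Fin m, d i ≠ 0 → (i : ℕ) < n :=
  hp d (mem_support_iff.2 hd)

lemma suppBelow_of_coeff {n : ℕ} {p : MvPolynomial (Fin m) R}
    (h : ∀ d : Fin m →₀ ℕ, coeff d p ≠ 0 → ∀ i : Fin m, d i ≠ 0 → (i : ℕ) < n) :
    SuppBelow n p := fun d hd => h d (mem_support_iff.1 hd)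

lemma suppBelow_add {n : ℕ} {p q : MvPolynomial (Fin m) R}
    (hp : SuppBelow n p) (hq : SuppBelow n q) : SuppBelow n (p + q) := by
  refine suppBelow_of_coeff fun d hd i hi => ?_
  rw [coeff_add] at hd
  rcases ne_or_eq (coeff d p) 0 with h | h
  · exact suppBelow_coeff_ne hp h i hi
  · exact suppBelow_coeff_ne hq (fun h' => hd (by rw [h, h', add_zero])) i hi

lemma suppBelow_sub {n : ℕ} {p q : MvPolynomial (Fin m) R}
    (hp : SuppBelow n p) (hq : SuppBelow n q) : SuppBelow n (p - q) := by
  rw [sub_eq_add_neg]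
  refine suppBelow_add hp ?_
  refine suppBelow_of_coeff fun d hd i hi => ?_
  rw [coeff_neg, neg_ne_zero] at hd
  exact suppBelow_coeff_ne hq hd i hi

lemma suppBelow_mul {n : ℕ} {p q : MvPolynomial (Fin m) R}
    (hp : SuppBelow n p) (hq : SuppBelow n q) : SuppBelow n (p * q) := by
  intro d hd i hi
  have := MvPolynomial.support_mul p q hd
  rw [Finset.mem_add] at this
  obtain ⟨a, ha, b, hb, rfl⟩ := this
  rcases Nat.pos_of_ne_zero hi with h
  have : a i ≠ 0 ∨ b i ≠ 0 := by
    by_contra hc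
    push_neg at hc
    simp [Finsupp.add_apply, hc.1, hc.2] at hi
  rcases this with h' | h'
  · exact hp a ha i h'
  · exact hq b hb i h'

lemma suppBelow_C {n : ℕ} (a : R) : SuppBelow n (C a : MvPolynomial (Fin m) R) := by
  refine suppBelow_of_coeff fun d hd i hi => ?_
  rw [coeff_C] at hd
  split_ifs at hd with h
  · subst h; simp at hi
  · exact absurd rfl hd

lemma suppBelow_X {n : ℕ} {i : Fin m} (hi : (i : ℕ) < n) :
    SuppBelow n (X i : MvPolynomial (Fin m) R) := by
  refine suppBelow_of_coeff fun d hd j hj => ?_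
  rw [coeff_X'] at hd
  split_ifs at hd with h
  · subst h
    rcases ne_or_eq j i with h' | h'
    · simp [Finsupp.single_apply, h'.symm] at hj
    · subst h'; exact hi
  · exact absurd rfl hd

lemma prod_pow_mem (J : Ideal R) (g : Fin m → R) (s : Finset (Fin m)) (e : Fin m → ℕ)
    (h : ∀ i ∈ s, g i ∈ J) : (∏ i ∈ s, g i ^ e i) ∈ J ^ (∑ i ∈ s, e i) := by
  classical
  induction s using Finset.induction_on with
  | empty => simp
  | insert _ _ hi ih =>
    rename_i a s
    rw [Finset.prod_insert hi, Finset.sum_insert hi, pow_add]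
    exact Ideal.mul_mem_mul (Ideal.pow_mem_pow (h a (Finset.mem_insert_self a s)) _)
      (ih fun i hi' => h i (Finset.mem_insert_of_mem hi'))

lemma finsupp_prod_pow_mem (J : Ideal R) (g : Fin m → R) (d : Fin m →₀ ℕ)
    (h : ∀ i : Fin m, d i ≠ 0 → g i ∈ J) :
    (d.prod fun i k => g i ^ k) ∈ J ^ (Finsupp.weight 1 d) := by
  have hw : (Finsupp.weight 1 d : ℕ) = ∑ i ∈ d.support, d i := by
    change Finsupp.weight (fun _ => 1) d = _
    rw [← Finsupp.degree_eq_weight_one]; rfl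
  rw [hw, Finsupp.prod]
  exact prod_pow_mem J g d.support _ fun i hi => h i (Finsupp.mem_support_iff.1 hi)


lemma eval_mem {f : Fin m → R} {n r : ℕ} {p : MvPolynomial (Fin m) R}
    (hp : p.IsHomogeneous r) (hs : SuppBelow n p) (J : Ideal R)
    (hJ : ∀ i : Fin m, (i : ℕ) < n → f i ∈ J) : aeval f p ∈ J ^ r := by
  rw [p.as_sum, map_sum]
  refine Submodule.sum_mem _ fun d hd => ?_
  rw [aeval_monomial]
  have hc : coeff d p ≠ 0 := mem_support_iff.1 hd
  have hw : Finsupp.weight 1 d = r := hp hc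
  have := finsupp_prod_pow_mem J f d (fun i hi => hJ i (hs d hd i hi))
  rw [hw] at this
  simpa using Ideal.mul_mem_left _ _ this

lemma eval_mem_succ {f : Fin m → R} {n r : ℕ} {p : MvPolynomial (Fin m) R}
    (hp : p.IsHomogeneous r) (hs : SuppBelow n p) (J : Ideal R)
    (hJ : ∀ i : Fin m, (i : ℕ) < n → f i ∈ J)
    (hc : ∀ d : Fin m →₀ ℕ, coeff d p ∈ J) : aeval f p ∈ J ^ (r + 1) := by
  rw [p.as_sum, map_sum]
  refine Submodule.sum_mem _ fun d hd => ?_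
  rw [aeval_monomial]
  have hne : coeff d p ≠ 0 := mem_support_iff.1 hd
  have hw : Finsupp.weight 1 d = r := hp hne
  have h2 := finsupp_prod_pow_mem J f d (fun i hi => hJ i (hs d hd i hi))
  rw [hw] at h2
  have : (algebraMap R R) (coeff d p) * (d.prod fun i k => f i ^ k) ∈ J * J ^ r := by
    simpa using Ideal.mul_mem_mul (hc d) h2
  rw [pow_succ]
  rw [mul_comm] at this
  exact this

lemma eq_C_of_coeff {p : MvPolynomial (Fin m) R}
    (h : ∀ d : Fin m →₀ ℕ, d ≠ 0 → coeff d p = 0) : p = C (coeff 0 p) := by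
  ext d
  rcases eq_or_ne d 0 with rfl | hd
  · simp
  · rw [h d hd, coeff_C, if_neg (fun h' => hd h'.symm)]

lemma coeff_mul_mem (J : Ideal R) {p : MvPolynomial (Fin m) R}
    (hp : ∀ d : Fin m →₀ ℕ, coeff d p ∈ J) (q : MvPolynomial (Fin m) R)
    (d : Fin m →₀ ℕ) : coeff d (q * p) ∈ J := by
  classical
  rw [coeff_mul]
  exact Submodule.sum_mem _ fun x _ => Ideal.mul_mem_left _ _ (hp x.2)



lemma exists_rep_one (f : Fin m → R) (n : ℕ) :
    ∀ x ∈ Jn f n, ∃ p : MvPolynomial (Fin m) R,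
      p.IsHomogeneous 1 ∧ SuppBelow n p ∧ aeval f p = x := by
  intro x hx
  refine Submodule.span_induction ?_ ?_ ?_ ?_ hx
  · rintro y ⟨i, hi, rfl⟩
    exact ⟨X i, isHomogeneous_X R i, suppBelow_X hi, by simp⟩
  · exact ⟨0, isHomogeneous_zero _ _ _, fun d hd => by simp at hd, by simp⟩
  · rintro y z _ _ ⟨p, hp, hsp, hep⟩ ⟨q, hq, hsq, heq⟩
    exact ⟨p + q, hp.add hq, suppBelow_add hsp hsq, by rw [map_add, hep, heq]⟩
  · rintro c y _ ⟨p, hp, hsp, hep⟩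
    refine ⟨C c * p, ?_, suppBelow_mul (suppBelow_C c) hsp, by subst hep; simp⟩
    simpa using (isHomogeneous_C _ c).mul hp


lemma exists_rep (f : Fin m → R) (n r : ℕ) :
    ∀ x ∈ (Jn f n) ^ r, ∃ p : MvPolynomial (Fin m) R,
      p.IsHomogeneous r ∧ SuppBelow n p ∧ aeval f p = x := by
  induction r with
  | zero =>
    intro x _
    exact ⟨C x, isHomogeneous_C _ _, suppBelow_C x, by simp⟩
  | succ r ih =>
    intro x hx
    rw [pow_succ] at hx
    refine Submodule.mul_induction_on hx ?_ ?_
    · rintro a ha b hb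
      obtain ⟨p, hp, hsp, hep⟩ := ih a ha
      obtain ⟨q, hq, hsq, heq⟩ := exists_rep_one f n b hb
      exact ⟨p * q, hp.mul hq, suppBelow_mul hsp hsq, by rw [map_mul, hep, heq]⟩
    · rintro y z ⟨p, hp, hsp, hep⟩ ⟨q, hq, hsq, heq⟩
      exact ⟨p + q, hp.add hq, suppBelow_add hsp hsq, by rw [map_add, hep, heq]⟩

lemma exists_rep_coeff (f : Fin m → R) (n r : ℕ) :
    ∀ x ∈ (Jn f n) ^ (r + 1), ∃ p : MvPolynomial (Fin m) R,
      p.IsHomogeneous r ∧ SuppBelow n p ∧ (∀ d : Fin m →₀ ℕ, coeff d p ∈ Jn f n) ∧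
        aeval f p = x := by
  intro x hx
  rw [pow_succ] at hx
  refine Submodule.mul_induction_on hx ?_ ?_
  · rintro a ha b hb
    obtain ⟨p, hp, hsp, hep⟩ := exists_rep f n r a ha
    refine ⟨C b * p, by simpa using (isHomogeneous_C _ b).mul hp,
      suppBelow_mul (suppBelow_C b) hsp, fun d => ?_, by subst hep; simp [mul_comm]⟩
    rw [coeff_C_mul]
    exact Ideal.mul_mem_right _ _ hb
  · rintro y z ⟨p, hp, hsp, hcp, hep⟩ ⟨q, hq, hsq, hcq, heq⟩
    exact ⟨p + q, hp.add hq, suppBelow_add hsp hsq,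
      fun d => by rw [coeff_add]; exact add_mem (hcp d) (hcq d),
      by rw [map_add, hep, heq]⟩


lemma S2_of_K (f : Fin m → R) (n t : ℕ)
    (hK : ∀ p : MvPolynomial (Fin m) R, p.IsHomogeneous t → SuppBelow n p →
      aeval f p = 0 → ∀ d : Fin m →₀ ℕ, coeff d p ∈ Jn f n) :
    ∀ p : MvPolynomial (Fin m) R, p.IsHomogeneous t → SuppBelow n p →
      aeval f p ∈ (Jn f n) ^ (t + 1) → ∀ d : Fin m →₀ ℕ, coeff d p ∈ Jn f n := by
  intro p hp hs hev d
  obtain ⟨p₁, hp₁, hs₁, hc₁, he₁⟩ := exists_rep_coeff f n t _ hev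
  have hq := hK (p - p₁) (hp.sub hp₁) (suppBelow_sub hs hs₁)
    (by rw [map_sub, he₁, sub_self]) d
  have h2 : coeff d p = coeff d (p - p₁) + coeff d p₁ := by rw [coeff_sub]; ring
  rw [h2]
  exact add_mem hq (hc₁ d)

lemma colon_pow (f : Fin m → R)
    (hreg : ∀ k : Fin m, ∀ r : R, r * f k ∈ Ideal.span (f '' {l : Fin m | l < k}) →
      r ∈ Ideal.span (f '' {l : Fin m | l < k}))
    {n : ℕ} (hn : n < m)
    (hK : ∀ t : ℕ, ∀ p : MvPolynomial (Fin m) R, p.IsHomogeneous t → SuppBelow n p →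
      aeval f p = 0 → ∀ d : Fin m →₀ ℕ, coeff d p ∈ Jn f n)
    (s : ℕ) (x : R) (hx : f ⟨n, hn⟩ * x ∈ (Jn f n) ^ s) : x ∈ (Jn f n) ^ s := by
  suffices h : ∀ t, t ≤ s → x ∈ (Jn f n) ^ t from h s le_rfl
  intro t
  induction t with
  | zero => intro _; simp
  | succ t ih =>
    intro hts
    have hxt := ih (Nat.le_of_succ_le hts)
    obtain ⟨p, hp, hsp, hep⟩ := exists_rep f n t x hxt
    have hev : aeval f (C (f ⟨n, hn⟩) * p) ∈ (Jn f n) ^ (t + 1) := by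
      rw [map_mul, aeval_C]
      have hle : (Jn f n) ^ s ≤ (Jn f n) ^ (t + 1) := Ideal.pow_le_pow_right hts
      simpa [hep] using hle hx
    have hco := S2_of_K f n t (hK t) (C (f ⟨n, hn⟩) * p)
      (by simpa using (isHomogeneous_C _ _).mul hp)
      (suppBelow_mul (suppBelow_C _) hsp) hev
    have hcp : ∀ d : Fin m →₀ ℕ, coeff d p ∈ Jn f n := by
      intro d
      have h1 := hco d
      rw [coeff_C_mul] at h1
      rw [← Jn_eq_span f ⟨n, hn⟩]
      exact hreg _ _ (by rw [mul_comm]; exact (Jn_eq_span f ⟨n, hn⟩).symm ▸ h1)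
    have h2 := eval_mem_succ hp hsp (Jn f n) (fun i hi => f_mem_Jn f hi) hcp
    rwa [hep] at h2

lemma key (f : Fin m → R)
    (hreg : ∀ k : Fin m, ∀ r : R, r * f k ∈ Ideal.span (f '' {l : Fin m | l < k}) →
      r ∈ Ideal.span (f '' {l : Fin m | l < k})) :
    ∀ n : ℕ, n ≤ m → ∀ r : ℕ, ∀ p : MvPolynomial (Fin m) R, p.IsHomogeneous r →
      SuppBelow n p → aeval f p = 0 → ∀ d : Fin m →₀ ℕ, coeff d p ∈ Jn f n := by
  intro n
  induction n with
  | zero =>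
    intro _ r p hp hs hev d
    have h0 : ∀ d' : Fin m →₀ ℕ, d' ≠ 0 → coeff d' p = 0 := by
      intro d' hd'
      by_contra hc
      obtain ⟨i, hi⟩ := Finsupp.ne_iff.1 hd'
      exact absurd (hs d' (mem_support_iff.2 hc) i hi) (Nat.not_lt_zero _)
    have hpC := eq_C_of_coeff h0
    rw [hpC, aeval_C] at hev
    have hc0 : coeff 0 p = 0 := by simpa using hev
    rcases eq_or_ne d 0 with rfl | hd
    · rw [hc0]; exact zero_mem _
    · rw [h0 d hd]; exact zero_mem _
  | succ n IH =>
    intro hn1 r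
    have hn : n < m := hn1
    have IHn := IH (le_of_lt hn)
    induction r using Nat.strong_induction_on with
    | _ r IHr =>
    intro p hp hs hev d
    rcases r with _ | r'
    · -- degree 0
      have h0 : ∀ d' : Fin m →₀ ℕ, d' ≠ 0 → coeff d' p = 0 := by
        intro d' hd'
        by_contra hc
        have hw := hp hc
        change Finsupp.weight (fun _ => 1) d' = 0 at hw
        rw [← Finsupp.degree_eq_weight_one] at hw
        exact hd' ((Finsupp.degree_eq_zero_iff d').1 hw)
      have hpC := eq_C_of_coeff h0
      rw [hpC, aeval_C] at hev
      have hc0 : coeff 0 p = 0 := by simpa using hev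
      rcases eq_or_ne d 0 with rfl | hd
      · rw [hc0]; exact zero_mem _
      · rw [h0 d hd]; exact zero_mem _
    · -- degree r' + 1
      set k : Fin m := ⟨n, hn⟩ with hk
      have hh_hom : (p.divMonomial (Finsupp.single k 1)).IsHomogeneous r' := by
        intro e he
        rw [coeff_divMonomial] at he
        have hw := hp he
        rw [map_add] at hw
        have hws1 : Finsupp.weight (1 : Fin m → ℕ) (Finsupp.single k 1) = 1 := by
          simp [Finsupp.weight_apply, Finsupp.sum_single_index]
        rw [hws1] at hw
        omega
      have hh_supp : SuppBelow (n + 1) (p.divMonomial (Finsupp.single k 1)) := by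
        refine suppBelow_of_coeff fun e he i hi => ?_
        rw [coeff_divMonomial] at he
        refine suppBelow_coeff_ne hs he i ?_
        intro h
        rw [Finsupp.add_apply] at h
        exact hi (by omega)
      have hg_supp : SuppBelow n (p.modMonomial (Finsupp.single k 1)) := by
        refine suppBelow_of_coeff fun e he i hi => ?_
        by_cases hle : Finsupp.single k 1 ≤ e
        · rw [coeff_modMonomial_of_le p hle] at he; exact absurd rfl he
        · rw [coeff_modMonomial_of_not_le p hle] at he
          have h1 := suppBelow_coeff_ne hs he i hi
          have hek : e k = 0 := by
            by_contra hek
            exact hle (Finsupp.single_le_iff.2 (Nat.one_le_iff_ne_zero.2 hek))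
          have hik : i ≠ k := fun h => hi (h ▸ hek)
          have hikn : (i : ℕ) ≠ n := fun h => hik (Fin.ext h)
          omega
      have hg_hom : (p.modMonomial (Finsupp.single k 1)).IsHomogeneous (r' + 1) := by
        intro e he
        by_cases hle : Finsupp.single k 1 ≤ e
        · rw [coeff_modMonomial_of_le p hle] at he; exact absurd rfl he
        · rw [coeff_modMonomial_of_not_le p hle] at he; exact hp he
      have hev2 : f k * aeval f (p.divMonomial (Finsupp.single k 1)) +
          aeval f (p.modMonomial (Finsupp.single k 1)) = 0 := by
        have hid := congrArg (aeval f) (divMonomial_add_modMonomial_single p k)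
        rw [map_add, map_mul, aeval_X, hev] at hid
        exact hid
      have hgJ : aeval f (p.modMonomial (Finsupp.single k 1)) ∈ (Jn f n) ^ (r' + 1) :=
        eval_mem hg_hom hg_supp _ (fun i hi => f_mem_Jn f hi)
      have hfk : f k * aeval f (p.divMonomial (Finsupp.single k 1)) ∈ (Jn f n) ^ (r' + 1) := by
        have heq : f k * aeval f (p.divMonomial (Finsupp.single k 1)) =
            -aeval f (p.modMonomial (Finsupp.single k 1)) :=
          eq_neg_of_add_eq_zero_left hev2
        rw [heq]
        exact neg_mem hgJ
      have hh'J : aeval f (p.divMonomial (Finsupp.single k 1)) ∈ (Jn f n) ^ (r' + 1) :=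
        colon_pow f hreg hn IHn (r' + 1) _ hfk
      have hh_coeff : ∀ e : Fin m →₀ ℕ,
          coeff e (p.divMonomial (Finsupp.single k 1)) ∈ Jn f (n + 1) := by
        have hKr' : ∀ q : MvPolynomial (Fin m) R, q.IsHomogeneous r' → SuppBelow (n + 1) q →
            aeval f q = 0 → ∀ e : Fin m →₀ ℕ, coeff e q ∈ Jn f (n + 1) :=
          fun q => IHr r' (Nat.lt_succ_self r') q
        exact S2_of_K f (n + 1) r' hKr' _ hh_hom hh_supp
          (Ideal.pow_right_mono (Jn_mono f (Nat.le_succ n)) _ hh'J)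
      obtain ⟨Q, hQh, hQs, hQe⟩ := exists_rep f n (r' + 1) _ hh'J
      have hw_hom : (p.modMonomial (Finsupp.single k 1) + C (f k) * Q).IsHomogeneous (r' + 1) :=
        hg_hom.add (by simpa using (isHomogeneous_C _ _).mul hQh)
      have hw_supp : SuppBelow n (p.modMonomial (Finsupp.single k 1) + C (f k) * Q) :=
        suppBelow_add hg_supp (suppBelow_mul (suppBelow_C _) hQs)
      have hw_ev : aeval f (p.modMonomial (Finsupp.single k 1) + C (f k) * Q) = 0 := by
        rw [map_add, map_mul, aeval_C, hQe]
        have halg : (algebraMap R R) (f k) = f k := rfl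
        rw [halg]
        linear_combination hev2
      have hw_co := IHn (r' + 1) _ hw_hom hw_supp hw_ev
      have hxk : ∀ e : Fin m →₀ ℕ,
          coeff e ((X k : MvPolynomial (Fin m) R) * p.divMonomial (Finsupp.single k 1)) ∈
            Jn f (n + 1) :=
        coeff_mul_mem _ hh_coeff _
      have hfkJ : f k ∈ Jn f (n + 1) := f_mem_Jn f (Nat.lt_succ_self n)
      have hg_co : coeff d (p.modMonomial (Finsupp.single k 1)) ∈ Jn f (n + 1) := by
        have h1 := Jn_mono f (Nat.le_succ n) (hw_co d)
        rw [coeff_add, coeff_C_mul] at h1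
        have h2 : coeff d (p.modMonomial (Finsupp.single k 1)) =
            (coeff d (p.modMonomial (Finsupp.single k 1)) + f k * coeff d Q) -
              f k * coeff d Q := by ring
        rw [h2]
        exact sub_mem h1 (Ideal.mul_mem_right _ _ hfkJ)
      have hsplit := congrArg (coeff d) (divMonomial_add_modMonomial_single p k)
      rw [coeff_add] at hsplit
      rw [← hsplit]
      exact add_mem (hxk d) hg_co

end QuasiRegAux


/-- Matsumura, Theorem 27: for `I = (f 0, ..., f (m-1))` generated by a regular
sequence, the associated graded ring `⊕ I^r/I^{r+1}` is isomorphic as a graded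
`(R/I)`-algebra to the polynomial ring `(R/I)[x_1, ..., x_m]` with `x_j ↦ f_j`.
Equivalently (the quasi-regularity formulation used here): evaluation at `f` of
homogeneous polynomials of degree `r` surjects onto `I^r`, and a homogeneous
polynomial of degree `r` evaluates into `I^{r+1}` exactly when all of its
coefficients lie in `I` (so each induced map
`(R/I)[x]_r → I^r/I^{r+1}` is bijective). -/
theorem associated_graded_iso_polynomial_of_regular_sequence
    {R : Type*} [CommRing R] {m : ℕ} (f : Fin m → R)
    (hreg : ∀ k : Fin m, ∀ r : R,
      r * f k ∈ Ideal.span (f '' {l : Fin m | l < k}) →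
      r ∈ Ideal.span (f '' {l : Fin m | l < k}))
    (hproper : Ideal.span (Set.range f) ≠ ⊤)
    (I : Ideal R) (hI : I = Ideal.span (Set.range f)) :
    (∀ r : ℕ, ∀ x ∈ I ^ r, ∃ p ∈ homogeneousSubmodule (Fin m) R r,
        aeval f p = x) ∧
    (∀ r : ℕ, ∀ p ∈ homogeneousSubmodule (Fin m) R r,
        (aeval f p ∈ I ^ (r + 1) ↔ ∀ d : Fin m →₀ ℕ, coeff d p ∈ I)) := by
  subst hI
  have hJm : QuasiRegAux.Jn f m = Ideal.span (Set.range f) := by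
    unfold QuasiRegAux.Jn
    have h1 : {l : Fin m | (l : ℕ) < m} = Set.univ := Set.eq_univ_of_forall fun l => l.is_lt
    rw [h1, Set.image_univ]
  have hsupp : ∀ p : MvPolynomial (Fin m) R, QuasiRegAux.SuppBelow m p :=
    fun p d _ i _ => i.is_lt
  constructor
  · intro r x hx
    rw [← hJm] at hx
    obtain ⟨p, hp, -, he⟩ := QuasiRegAux.exists_rep f m r x hx
    exact ⟨p, (mem_homogeneousSubmodule _ _).2 hp, he⟩
  · intro r p hp
    rw [mem_homogeneousSubmodule] at hp
    constructor
    · intro hev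
      rw [← hJm] at hev
      intro d
      rw [← hJm]
      exact QuasiRegAux.S2_of_K f m r (QuasiRegAux.key f hreg m le_rfl r) p hp
        (hsupp p) hev d
    · intro hc
      rw [← hJm]
      exact QuasiRegAux.eval_mem_succ hp (hsupp p) _
        (fun i hi => QuasiRegAux.f_mem_Jn f hi) (fun d => hJm ▸ hc d)
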